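/- Let α ∈ (0,1], u > 0, and let F : [0,1]^n → [0,1] be differentiable, L-Lipschitz, β-smooth, with ‖∇F(x)‖ ≤ G for all x ∈ [0,1]^n. Then for every fixed τ ∈ [0,1], the map x ↦ H̃(x,τ) is differentiable on [0,1]^n and its gradient in x is (1/α)·(β + L·G/u)-Lipschitz, i.e. ‖∇ₓH̃(x,τ) − ∇ₓH̃(y,τ)‖ ≤ (1/α)·(β + L·G/u)·‖x − y‖ for all x, y ∈ [0,1]^n. -/

import Mathlib

open MeasureTheory

/-- The unit cube `[0,1]^n` in `ℝⁿ` (with the Euclidean norm). -/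
def cube (n : ℕ) : Set (EuclideanSpace ℝ (Fin n)) :=
  {x | ∀ i, x i ∈ Set.Icc (0:ℝ) 1}

/-- The `u`-smoothed CVaR auxiliary function
`H̃(x,τ) = (1/u)·∫₀ᵘ (τ + ξ - (1/α)·max{τ + ξ - F(x), 0}) dξ`,
expressed as a function of the value `v = F(x)`. -/
noncomputable def smoothAuxH (α u : ℝ) (v τ : ℝ) : ℝ :=
  (1 / u) * ∫ ξ in (0:ℝ)..u, (τ + ξ - (1 / α) * max (τ + ξ - v) 0)

lemma hasDerivAt_mul_abs (a : ℝ) : HasDerivAt (fun x : ℝ => x * |x|) (2 * |a|) a := by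
  rcases lt_trichotomy a 0 with h | h | h
  · have he : (fun x : ℝ => x * |x|) =ᶠ[nhds a] (fun x : ℝ => -(x * x)) := by
      filter_upwards [eventually_lt_nhds h] with x hx
      rw [abs_of_neg hx]; ring
    have h2 : HasDerivAt (fun x : ℝ => -(x * x)) (2 * |a|) a := by
      have := ((hasDerivAt_id' (x := a)).mul (hasDerivAt_id' (x := a))).neg
      refine this.congr_deriv ?_
      rw [abs_of_neg h]; ring
    exact h2.congr_of_eventuallyEq he
  · subst h
    rw [hasDerivAt_iff_tendsto_slope]
    have he : (fun x : ℝ => |x|) =ᶠ[nhdsWithin 0 {(0:ℝ)}ᶜ] slope (fun x : ℝ => x * |x|) 0 := by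
      filter_upwards [self_mem_nhdsWithin] with x hx
      simp only [Set.mem_compl_iff, Set.mem_singleton_iff] at hx
      rw [slope_def_field, eq_div_iff (sub_ne_zero.mpr hx)]
      simp only [sub_zero, abs_zero, mul_zero, zero_mul]
      ring
    have habs : Filter.Tendsto (fun x : ℝ => |x|) (nhdsWithin 0 {(0:ℝ)}ᶜ) (nhds (2 * |(0:ℝ)|)) := by
      have h0 : (2 * |(0:ℝ)|) = |(0:ℝ)| := by simp
      rw [h0]
      exact ((continuous_abs : Continuous fun x : ℝ => |x|).tendsto 0).mono_left nhdsWithin_le_nhds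
    exact habs.congr' he
  · have he : (fun x : ℝ => x * |x|) =ᶠ[nhds a] (fun x : ℝ => x * x) := by
      filter_upwards [eventually_gt_nhds h] with x hx
      rw [abs_of_pos hx]
    have h2 : HasDerivAt (fun x : ℝ => x * x) (2 * |a|) a := by
      have := (hasDerivAt_id' (x := a)).mul (hasDerivAt_id' (x := a))
      refine this.congr_deriv ?_
      rw [abs_of_pos h]; ring
    exact h2.congr_of_eventuallyEq he

lemma hasDerivAt_maxsq (a : ℝ) :
    HasDerivAt (fun x : ℝ => max x 0 ^ 2 / 2) (max a 0) a := by
  have key : (fun x : ℝ => max x 0 ^ 2 / 2) = (fun x : ℝ => (x ^ 2 + x * |x|) / 4) := by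
    funext x
    rcases le_total x 0 with h | h
    · rw [max_eq_right h, abs_of_nonpos h]; ring
    · rw [max_eq_left h, abs_of_nonneg h]; ring
  rw [key]
  have h1 : HasDerivAt (fun x : ℝ => x ^ 2 + x * |x|) (2 * a ^ 1 + 2 * |a|) a :=
    (hasDerivAt_pow 2 a).add (hasDerivAt_mul_abs a)
  have h2 := h1.div_const 4
  refine h2.congr_deriv ?_
  rcases le_total a 0 with h | h
  · rw [max_eq_right h, abs_of_nonpos h]; ring
  · rw [max_eq_left h, abs_of_nonneg h]; ring

lemma smoothAuxH_eq (α τ v : ℝ) {u : ℝ} (hu : 0 < u) :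
    smoothAuxH α u v τ
      = τ + u / 2 - (1 / u) * (1 / α) *
          (max (τ + u - v) 0 ^ 2 / 2 - max (τ - v) 0 ^ 2 / 2) := by
  unfold smoothAuxH
  have hint : (∫ ξ in (0:ℝ)..u, (τ + ξ - (1 / α) * max (τ + ξ - v) 0))
      = (τ * u + u ^ 2 / 2 - (1 / α) * (max (τ + u - v) 0 ^ 2 / 2))
        - (τ * 0 + (0:ℝ) ^ 2 / 2 - (1 / α) * (max (τ + 0 - v) 0 ^ 2 / 2)) := by
    apply intervalIntegral.integral_eq_sub_of_hasDerivAt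
    · intro t _
      have h1 : HasDerivAt (fun ξ : ℝ => τ * ξ + ξ ^ 2 / 2) (τ + t) t := by
        have := ((hasDerivAt_id t).const_mul τ).add ((hasDerivAt_pow 2 t).div_const 2)
        refine this.congr_deriv ?_
        ring
      have h2 : HasDerivAt (fun ξ : ℝ => τ + ξ - v) 1 t := by
        simpa using ((hasDerivAt_id t).const_add τ).sub_const v
      have h3 : HasDerivAt (fun ξ : ℝ => max (τ + ξ - v) 0 ^ 2 / 2)
          (max (τ + t - v) 0 * 1) t := by
          have := (hasDerivAt_maxsq (τ + t - v)).comp t h2; exact this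
      have := h1.sub (h3.const_mul (1 / α))
      refine this.congr_deriv ?_
      ring
    · apply Continuous.intervalIntegrable
      fun_prop
  rw [hint, show τ + 0 - v = τ - v from by ring]
  have hu' : u ≠ 0 := ne_of_gt hu
  have gen : ∀ iα A B : ℝ,
      (1 / u) * ((τ * u + u ^ 2 / 2 - iα * (A ^ 2 / 2))
        - (τ * 0 + (0:ℝ) ^ 2 / 2 - iα * (B ^ 2 / 2)))
      = τ + u / 2 - (1 / u) * iα * (A ^ 2 / 2 - B ^ 2 / 2) := by
    intro iα A B
    field_simp
    ring
  exact gen _ _ _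

lemma hasDerivAt_smoothAuxH (α τ : ℝ) {u : ℝ} (hu : 0 < u) (v : ℝ) :
    HasDerivAt (fun w : ℝ => smoothAuxH α u w τ)
      ((1 / u) * (1 / α) * (max (τ + u - v) 0 - max (τ - v) 0)) v := by
  have e : (fun w : ℝ => smoothAuxH α u w τ)
      = fun w : ℝ => τ + u / 2 - (1 / u) * (1 / α) *
          (max (τ + u - w) 0 ^ 2 / 2 - max (τ - w) 0 ^ 2 / 2) :=
    funext fun w => smoothAuxH_eq α τ w hu
  rw [e]
  have h1 : HasDerivAt (fun w : ℝ => τ + u - w) (-1) v := by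
    simpa using (hasDerivAt_id v).const_sub (τ + u)
  have h2 : HasDerivAt (fun w : ℝ => τ - w) (-1) v := by
    simpa using (hasDerivAt_id v).const_sub τ
  have h3 : HasDerivAt (fun w : ℝ => max (τ + u - w) 0 ^ 2 / 2)
      (max (τ + u - v) 0 * (-1)) v := (hasDerivAt_maxsq (τ + u - v)).comp v h1
  have h4 : HasDerivAt (fun w : ℝ => max (τ - w) 0 ^ 2 / 2)
      (max (τ - v) 0 * (-1)) v := (hasDerivAt_maxsq (τ - v)).comp v h2
  have := (hasDerivAt_const v (τ + u / 2)).sub ((h3.sub h4).const_mul ((1 / u) * (1 / α)))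
  refine this.congr_deriv ?_
  ring

/-- The "clamp" factor. -/
noncomputable def phiAux (τ u v : ℝ) : ℝ := max (τ + u - v) 0 - max (τ - v) 0

lemma phiAux_eq_min (τ v : ℝ) {u : ℝ} (hu : 0 < u) :
    phiAux τ u v = min (max (τ + u - v) 0) u := by
  unfold phiAux
  rcases le_total (τ - v) 0 with h | h
  · rw [max_eq_right h, min_eq_left]
    · ring
    · exact max_le (by linarith) hu.le
  · rw [max_eq_left h, max_eq_left (by linarith), min_eq_right (by linarith)]
    ring

lemma phiAux_nonneg (τ v : ℝ) {u : ℝ} (hu : 0 < u) : 0 ≤ phiAux τ u v :=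
  sub_nonneg.mpr (max_le_max (by linarith) le_rfl)

lemma phiAux_le (τ v : ℝ) {u : ℝ} (hu : 0 < u) : phiAux τ u v ≤ u := by
  rw [phiAux_eq_min τ v hu]; exact min_le_right _ _

lemma phiAux_lip (τ v w : ℝ) {u : ℝ} (hu : 0 < u) :
    |phiAux τ u v - phiAux τ u w| ≤ |v - w| := by
  rw [phiAux_eq_min τ v hu, phiAux_eq_min τ w hu]
  calc |min (max (τ + u - v) 0) u - min (max (τ + u - w) 0) u|
      ≤ max |max (τ + u - v) 0 - max (τ + u - w) 0| |u - u| :=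
        abs_min_sub_min_le_max _ _ _ _
    _ ≤ |v - w| := by
        apply max_le
        · have := abs_max_sub_max_le_abs (τ + u - v) (τ + u - w) 0
          calc |max (τ + u - v) 0 - max (τ + u - w) 0| ≤ |(τ + u - v) - (τ + u - w)| := this
            _ = |v - w| := by rw [abs_sub_comm]; congr 1; ring
        · simpa using abs_nonneg (v - w)

/-- If `F : [0,1]ⁿ → [0,1]` is differentiable, `L`-Lipschitz, `β`-smooth, with `‖∇F‖ ≤ G`,
then for every fixed `τ ∈ [0,1]`, the map `x ↦ H̃(x,τ)` is differentiable and its gradient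
is `(1/α)·(β + L·G/u)`-Lipschitz. -/
theorem stmt1 (n : ℕ) (α u L β G : ℝ) (hα : α ∈ Set.Ioc (0:ℝ) 1) (hu : 0 < u)
    (F : EuclideanSpace ℝ (Fin n) → ℝ)
    (hrange : ∀ x ∈ cube n, F x ∈ Set.Icc (0:ℝ) 1)
    (hdiff : Differentiable ℝ F)
    (hLip : ∀ x ∈ cube n, ∀ y ∈ cube n, |F x - F y| ≤ L * ‖x - y‖)
    (hβ : ∀ x ∈ cube n, ∀ y ∈ cube n, ‖gradient F x - gradient F y‖ ≤ β * ‖x - y‖)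
    (hG : ∀ x ∈ cube n, ‖gradient F x‖ ≤ G)
    (τ : ℝ) (hτ : τ ∈ Set.Icc (0:ℝ) 1) :
    (∀ x ∈ cube n, DifferentiableAt ℝ (fun y => smoothAuxH α u (F y) τ) x) ∧
    (∀ x ∈ cube n, ∀ y ∈ cube n,
      ‖gradient (fun y => smoothAuxH α u (F y) τ) x -
        gradient (fun y => smoothAuxH α u (F y) τ) y‖
        ≤ (1 / α) * (β + L * G / u) * ‖x - y‖) := by
  obtain ⟨hα0, hα1⟩ := hα
  set c : ℝ := (1 / u) * (1 / α) with hc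
  have hc0 : 0 ≤ c := by positivity
  -- the gradient of the composition
  have hGrad : ∀ x : EuclideanSpace ℝ (Fin n),
      HasGradientAt (fun y => smoothAuxH α u (F y) τ)
        ((c * phiAux τ u (F x)) • gradient F x) x := by
    intro x
    have hF : HasFDerivAt F (InnerProductSpace.toDual ℝ _ (gradient F x)) x :=
      (hdiff x).hasGradientAt
    have hD := hasDerivAt_smoothAuxH α τ hu (F x)
    have hcomp := hD.comp_hasFDerivAt x hF
    rw [hasGradientAt_iff_hasFDerivAt, _root_.map_smul]
    exact hcomp
  have hgrad_eq : ∀ x, gradient (fun y => smoothAuxH α u (F y) τ) x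
      = (c * phiAux τ u (F x)) • gradient F x := fun x => (hGrad x).gradient
  constructor
  · intro x _
    exact (hGrad x).differentiableAt
  · intro x hx y hy
    rw [hgrad_eq, hgrad_eq]
    set gx := gradient F x
    set gy := gradient F y
    have key : (c * phiAux τ u (F x)) • gx - (c * phiAux τ u (F y)) • gy
        = (c * phiAux τ u (F x)) • (gx - gy)
          + (c * (phiAux τ u (F x) - phiAux τ u (F y))) • gy := by
      module
    rw [key]
    have hβ' := hβ x hx y hy
    have hG' := hG y hy
    have hL' := hLip x hx y hy
    have hφx0 := phiAux_nonneg τ (F x) hu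
    have hφxu := phiAux_le τ (F x) hu
    have hφlip := phiAux_lip τ (F x) (F y) hu
    have hgxy : (0:ℝ) ≤ ‖gx - gy‖ := norm_nonneg _
    have hGnn : (0:ℝ) ≤ G := le_trans (norm_nonneg _) hG'
    have step1 : ‖(c * phiAux τ u (F x)) • (gx - gy)
          + (c * (phiAux τ u (F x) - phiAux τ u (F y))) • gy‖
        ≤ |c * phiAux τ u (F x)| * ‖gx - gy‖
          + |c * (phiAux τ u (F x) - phiAux τ u (F y))| * ‖gy‖ := by
      refine (norm_add_le _ _).trans ?_
      rw [norm_smul, norm_smul]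
      rfl
    refine step1.trans ?_
    have b1 : |c * phiAux τ u (F x)| * ‖gx - gy‖ ≤ c * u * (β * ‖x - y‖) := by
      have h1 : |c * phiAux τ u (F x)| ≤ c * u := by
        rw [abs_of_nonneg (mul_nonneg hc0 hφx0)]
        exact mul_le_mul_of_nonneg_left hφxu hc0
      have h2 : (0:ℝ) ≤ β * ‖x - y‖ := le_trans hgxy hβ'
      calc |c * phiAux τ u (F x)| * ‖gx - gy‖
          ≤ (c * u) * ‖gx - gy‖ := mul_le_mul_of_nonneg_right h1 hgxy
        _ ≤ (c * u) * (β * ‖x - y‖) :=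
            mul_le_mul_of_nonneg_left hβ' (by positivity)
    have b2 : |c * (phiAux τ u (F x) - phiAux τ u (F y))| * ‖gy‖
        ≤ c * (L * ‖x - y‖) * G := by
      have h1 : |c * (phiAux τ u (F x) - phiAux τ u (F y))| ≤ c * (L * ‖x - y‖) := by
        rw [abs_mul, abs_of_nonneg hc0]
        exact mul_le_mul_of_nonneg_left (hφlip.trans hL') hc0
      calc |c * (phiAux τ u (F x) - phiAux τ u (F y))| * ‖gy‖
          ≤ (c * (L * ‖x - y‖)) * ‖gy‖ :=
            mul_le_mul_of_nonneg_right h1 (norm_nonneg _)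
        _ ≤ (c * (L * ‖x - y‖)) * G :=
            mul_le_mul_of_nonneg_left hG' (le_trans (abs_nonneg _) h1)
    refine (add_le_add b1 b2).trans (le_of_eq ?_)
    have hu' : u ≠ 0 := ne_of_gt hu
    have hα' : α ≠ 0 := ne_of_gt hα0
    rw [hc]; field_simp
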